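/- arXiv:1711.05886 — 6 statements merged into one kernel-verified Lean document; each statement's English description precedes it below -/
import Mathlib

section
/- If τ : ℤ³ → F (F a field) is nowhere zero and satisfies the lattice AKP equation A·τ_{k+1,l,m}τ_{k,l+1,m+1} + B·τ_{k,l+1,m}τ_{k+1,l,m+1} + C·τ_{k,l,m+1}τ_{k+1,l+1,m} = 0 for all k,l,m, then the fourth conservation law holds: A(p_{k+1,l,m} − p_{k,l,m}) + B(q_{k,l+1,m} − q_{k,l,m}) + C(v_{k,l,m+1} − v_{k,l,m}) = 0 for all k,l,m, where p = τ_{k,l,m}τ_{k,l+1,m+1}/(τ_{k,l+1,m}τ_{k,l,m+1}), q = τ_{k,l,m}τ_{k+1,l,m+1}/(τ_{k+1,l,m}τ_{k,l,m+1}), v = τ_{k+1,l+1,m}τ_{k,l,m}/(τ_{k+1,l,m}τ_{k,l+1,m}). -/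
theorem akp_fourth_conservation_law
    {F : Type*} [Field F] (A B C : F) (t : ℤ → ℤ → ℤ → F)
    (ht : ∀ k l m : ℤ, t k l m ≠ 0)
    (hAKP : ∀ k l m : ℤ,
      A * (t (k+1) l m * t k (l+1) (m+1)) + B * (t k (l+1) m * t (k+1) l (m+1))
        + C * (t k l (m+1) * t (k+1) (l+1) m) = 0) :
    ∀ k l m : ℤ,
      let p : ℤ → ℤ → ℤ → F := fun k l m =>
        t k l m * t k (l+1) (m+1) / (t k (l+1) m * t k l (m+1))
      let q : ℤ → ℤ → ℤ → F := fun k l m =>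
        t k l m * t (k+1) l (m+1) / (t (k+1) l m * t k l (m+1))
      let v : ℤ → ℤ → ℤ → F := fun k l m =>
        t (k+1) (l+1) m * t k l m / (t (k+1) l m * t k (l+1) m)
      A * (p (k+1) l m - p k l m) + B * (q k (l+1) m - q k l m)
        + C * (v k l (m+1) - v k l m) = 0 := by
  intro k l m p q v
  have h1 : A * p (k+1) l m + B * q k (l+1) m + C * v k l (m+1)
      = t (k+1) (l+1) (m+1) *
          (A * (t (k+1) l m * t k (l+1) (m+1)) + B * (t k (l+1) m * t (k+1) l (m+1))
            + C * (t k l (m+1) * t (k+1) (l+1) m))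
        / (t (k+1) (l+1) m * t (k+1) l (m+1) * t k (l+1) (m+1)) := by
    simp only [p, q, v]
    rw [← mul_div_assoc, ← mul_div_assoc, ← mul_div_assoc]
    rw [div_add_div _ _ (mul_ne_zero (ht _ _ _) (ht _ _ _)) (mul_ne_zero (ht _ _ _) (ht _ _ _)),
      div_add_div _ _ (mul_ne_zero (mul_ne_zero (ht _ _ _) (ht _ _ _))
        (mul_ne_zero (ht _ _ _) (ht _ _ _))) (mul_ne_zero (ht _ _ _) (ht _ _ _)),
      div_eq_div_iff (by simp [ht]) (by simp [ht])]
    ring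
  have h2 : A * p k l m + B * q k l m + C * v k l m
      = t k l m *
          (A * (t (k+1) l m * t k (l+1) (m+1)) + B * (t k (l+1) m * t (k+1) l (m+1))
            + C * (t k l (m+1) * t (k+1) (l+1) m))
        / (t k (l+1) m * t k l (m+1) * t (k+1) l m) := by
    simp only [p, q, v]
    rw [← mul_div_assoc, ← mul_div_assoc, ← mul_div_assoc]
    rw [div_add_div _ _ (mul_ne_zero (ht _ _ _) (ht _ _ _)) (mul_ne_zero (ht _ _ _) (ht _ _ _)),
      div_add_div _ _ (mul_ne_zero (mul_ne_zero (ht _ _ _) (ht _ _ _))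
        (mul_ne_zero (ht _ _ _) (ht _ _ _))) (mul_ne_zero (ht _ _ _) (ht _ _ _)),
      div_eq_div_iff (by simp [ht]) (by simp [ht])]
    ring
  rw [hAKP k l m] at h1 h2
  simp only [mul_zero, zero_div] at h1 h2
  linear_combination h1 - h2
end

section
/- If τ : ℤ³ → F is nowhere zero and satisfies the dual AKP equation (with parameters a₁, a₂, a₃, a₄), then the difference equation a₁(û − ũ) + a₂(z̃ − ẑ) + a₃(w − ẇ) + a₄(v − v̇) = 0 holds at every lattice point, where u = τ̃·(τ̇ shifted down by one in k)/(ττ̇) = τ_{k+1,l,m}τ_{k-1,l,m+1}/(τ_{k,l,m}τ_{k,l,m+1}), z = τ_{k,l+1,m}τ_{k,l-1,m+1}/(τ_{k,l,m}τ_{k,l,m+1}), w = τ_{k,l,m+1}τ_{k+1,l+1,m-1}/(τ_{k+1,l,m}τ_{k,l+1,m}), v = τ_{k+1,l+1,m}τ_{k,l,m}/(τ_{k+1,l,m}τ_{k,l+1,m}). -/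
/-- The dual AKP quadrilinear 14-point lattice expression. -/
def dualAKP {F : Type*} [Field F] (a1 a2 a3 a4 : F) (t : ℤ → ℤ → ℤ → F)
    (k l m : ℤ) : F :=
    a1 * (t (k-1) (l+1) (m+1) * t (k+1) l m * t (k+1) l (m+1) * t (k+1) (l+1) m
        - t k l (m+1) * t k (l+1) m * t k (l+1) (m+1) * t (k+2) l m)
  + a2 * (t k (l+1) m * t k (l+1) (m+1) * t (k+1) (l-1) (m+1) * t (k+1) (l+1) m
        - t k l (m+1) * t k (l+2) m * t (k+1) l m * t (k+1) l (m+1))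
  + a3 * (t k l (m+1) * t k (l+1) (m+1) * t (k+1) l (m+1) * t (k+1) (l+1) (m-1)
        - t k l (m+2) * t k (l+1) m * t (k+1) l m * t (k+1) (l+1) m)
  + a4 * (t k l m * t k (l+1) (m+1) * t (k+1) l (m+1) * t (k+1) (l+1) m
        - t k l (m+1) * t k (l+1) m * t (k+1) l m * t (k+1) (l+1) (m+1))

variable {F : Type*} [Field F]

/-- u = tau_{k+1,l,m} tau_{k-1,l,m+1} / (tau_{k,l,m} tau_{k,l,m+1}) -/
def uu (t : ℤ → ℤ → ℤ → F) (k l m : ℤ) : F :=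
  t (k+1) l m * t (k-1) l (m+1) / (t k l m * t k l (m+1))

/-- z = tau_{k,l+1,m} tau_{k,l-1,m+1} / (tau_{k,l,m} tau_{k,l,m+1}) -/
def zz (t : ℤ → ℤ → ℤ → F) (k l m : ℤ) : F :=
  t k (l+1) m * t k (l-1) (m+1) / (t k l m * t k l (m+1))

/-- w = tau_{k,l,m+1} tau_{k+1,l+1,m-1} / (tau_{k+1,l,m} tau_{k,l+1,m}) -/
def ww (t : ℤ → ℤ → ℤ → F) (k l m : ℤ) : F :=
  t k l (m+1) * t (k+1) (l+1) (m-1) / (t (k+1) l m * t k (l+1) m)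

/-- v = tau_{k+1,l+1,m} tau_{k,l,m} / (tau_{k+1,l,m} tau_{k,l+1,m}) -/
def vv (t : ℤ → ℤ → ℤ → F) (k l m : ℤ) : F :=
  t (k+1) (l+1) m * t k l m / (t (k+1) l m * t k (l+1) m)

theorem dualAKP_third_conservation_law (a1 a2 a3 a4 : F) (t : ℤ → ℤ → ℤ → F)
    (ht : ∀ k l m : ℤ, t k l m ≠ 0)
    (hD : ∀ k l m : ℤ, dualAKP a1 a2 a3 a4 t k l m = 0) :
    ∀ k l m : ℤ,
      a1 * (uu t k (l+1) m - uu t (k+1) l m)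
        + a2 * (zz t (k+1) l m - zz t k (l+1) m)
        + a3 * (ww t k l m - ww t k l (m+1))
        + a4 * (vv t k l m - vv t k l (m+1)) = 0 := by
  intro k l m
  have h := hD k l m
  rw [dualAKP] at h
  have e1 : k + 1 - 1 = k := by ring
  have e2 : l + 1 - 1 = l := by ring
  have e3 : m + 1 - 1 = m := by ring
  have e4 : k + 1 + 1 = k + 2 := by ring
  have e5 : l + 1 + 1 = l + 2 := by ring
  have e6 : m + 1 + 1 = m + 2 := by ring
  set x1 := t (k+1) l m with hx1
  set x2 := t (k+1) l (m+1) with hx2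
  set x3 := t k (l+1) m with hx3
  set x4 := t k (l+1) (m+1) with hx4
  have hP : x1 * x2 * x3 * x4 ≠ 0 := by
    exact mul_ne_zero (mul_ne_zero (mul_ne_zero (ht _ _ _) (ht _ _ _)) (ht _ _ _)) (ht _ _ _)
  have h12 : x1 * x2 ≠ 0 := mul_ne_zero (ht _ _ _) (ht _ _ _)
  have h34 : x3 * x4 ≠ 0 := mul_ne_zero (ht _ _ _) (ht _ _ _)
  have h13 : x1 * x3 ≠ 0 := mul_ne_zero (ht _ _ _) (ht _ _ _)
  have h24 : x2 * x4 ≠ 0 := mul_ne_zero (ht _ _ _) (ht _ _ _)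
  have r1 : uu t k (l+1) m
      = t (k+1) (l+1) m * t (k-1) (l+1) (m+1) * x1 * x2 / (x1 * x2 * x3 * x4) := by
    rw [uu, ← hx3, ← hx4, div_eq_div_iff h34 hP]; ring
  have r2 : uu t (k+1) l m
      = t (k+2) l m * t k l (m+1) * x3 * x4 / (x1 * x2 * x3 * x4) := by
    rw [uu, e4, e1, ← hx1, ← hx2, div_eq_div_iff h12 hP]; ring
  have r3 : zz t (k+1) l m
      = t (k+1) (l+1) m * t (k+1) (l-1) (m+1) * x3 * x4 / (x1 * x2 * x3 * x4) := by
    rw [zz, ← hx1, ← hx2, div_eq_div_iff h12 hP]; ring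
  have r4 : zz t k (l+1) m
      = t k (l+2) m * t k l (m+1) * x1 * x2 / (x1 * x2 * x3 * x4) := by
    rw [zz, e5, e2, ← hx3, ← hx4, div_eq_div_iff h34 hP]; ring
  have r5 : ww t k l m
      = t k l (m+1) * t (k+1) (l+1) (m-1) * x2 * x4 / (x1 * x2 * x3 * x4) := by
    rw [ww, ← hx1, ← hx3, div_eq_div_iff h13 hP]; ring
  have r6 : ww t k l (m+1)
      = t k l (m+2) * t (k+1) (l+1) m * x1 * x3 / (x1 * x2 * x3 * x4) := by
    rw [ww, e6, e3, ← hx2, ← hx4, div_eq_div_iff h24 hP]; ring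
  have r7 : vv t k l m
      = t (k+1) (l+1) m * t k l m * x2 * x4 / (x1 * x2 * x3 * x4) := by
    rw [vv, ← hx1, ← hx3, div_eq_div_iff h13 hP]; ring
  have r8 : vv t k l (m+1)
      = t (k+1) (l+1) (m+1) * t k l (m+1) * x1 * x3 / (x1 * x2 * x3 * x4) := by
    rw [vv, ← hx2, ← hx4, div_eq_div_iff h24 hP]; ring
  rw [r1, r2, r3, r4, r5, r6, r7, r8]
  rw [div_sub_div_same, div_sub_div_same, div_sub_div_same, div_sub_div_same]
  rw [← mul_div_assoc, ← mul_div_assoc, ← mul_div_assoc, ← mul_div_assoc]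
  rw [← add_div, ← add_div, ← add_div]
  rw [div_eq_zero_iff]
  left
  linear_combination h
end

section
/- The matrix conservation law holds as an algebraic identity: for any nowhere-zero τ : ℤ³ → F, P̃ − P + Q̂ − Q + Ṙ − R = Vᵀ·W, where P, Q, R are the explicit 3×4 matrices of quotients of shifted τ values given in the paper, V = (τ̂̇τ̃, τ̃̇τ̂, τ̂̃τ̇) is a row 3-vector, and W is the row 4-vector of AKP conservation-law characteristics W = ( τ_{k-1,l+1,m+1}/(τ̂̇τ̂τ̇) − τ_{k+2,l,m}/(τ̃τ̃̂τ̃̇), τ_{k+1,l-1,m+1}/(τ̃̇τ̃τ̇) − τ_{k,l+2,m}/(τ̂τ̂̇τ̃̂), τ_{k+1,l+1,m-1}/(τ̃̂τ̃τ̂) − τ_{k,l,m+2}/(τ̇τ̃̇τ̂̇), τ/(τ̃τ̂τ̇) − τ̃̂̇/(τ̃̂τ̂̇τ̃̇) ); here P̃, Q̂, Ṙ denote P, Q, R with all entries shifted by one unit in k, l, m respectively, and Vᵀ·W is the 3×4 outer product. -/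
set_option maxHeartbeats 4000000


variable {F : Type*} [Field F]

/-- The matrix P of the matrix conservation law. -/
def matP (t : ℤ → ℤ → ℤ → F) (k l m : ℤ) : Matrix (Fin 3) (Fin 4) F :=
  !![ -(t (k+1) l m * t (k-1) (l+1) (m+1)) / (t k (l+1) m * t k l (m+1)), 0, 0,
      -(t k l m * t k (l+1) (m+1)) / (t k (l+1) m * t k l (m+1));
      -(t (k+1) l m * t (k-1) (l+1) m) / (t k (l+1) m * t k l m), 0,
      t k l (m+1) * t k (l+1) (m-1) / (t k (l+1) m * t k l m), 0;
      -(t (k+1) l m * t (k-1) l (m+1)) / (t k l (m+1) * t k l m),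
      t k (l+1) m * t k (l-1) (m+1) / (t k l (m+1) * t k l m), 0, 0]

/-- The matrix Q of the matrix conservation law. -/
def matQ (t : ℤ → ℤ → ℤ → F) (k l m : ℤ) : Matrix (Fin 3) (Fin 4) F :=
  !![ 0, -(t k (l+1) m * t (k+1) (l-1) m) / (t (k+1) l m * t k l m),
      t k l (m+1) * t (k+1) l (m-1) / (t (k+1) l m * t k l m), 0;
      0, -(t k (l+1) m * t (k+1) (l-1) (m+1)) / (t (k+1) l m * t k l (m+1)), 0,
      -(t k l m * t (k+1) l (m+1)) / (t (k+1) l m * t k l (m+1));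
      t (k+1) l m * t (k-1) l (m+1) / (t k l (m+1) * t k l m),
      -(t k (l+1) m * t k (l-1) (m+1)) / (t k l (m+1) * t k l m), 0, 0]

/-- The matrix R of the matrix conservation law. -/
def matR (t : ℤ → ℤ → ℤ → F) (k l m : ℤ) : Matrix (Fin 3) (Fin 4) F :=
  !![ 0, t k (l+1) m * t (k+1) (l-1) m / (t (k+1) l m * t k l m),
      -(t k l (m+1) * t (k+1) l (m-1)) / (t (k+1) l m * t k l m), 0;
      t (k+1) l m * t (k-1) (l+1) m / (t k (l+1) m * t k l m), 0,
      -(t k l (m+1) * t k (l+1) (m-1)) / (t k (l+1) m * t k l m), 0;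
      0, 0, -(t k l (m+1) * t (k+1) (l+1) (m-1)) / (t (k+1) l m * t k (l+1) m),
      -(t (k+1) (l+1) m * t k l m) / (t (k+1) l m * t k (l+1) m)]

/-- The vector V. -/
def vecV (t : ℤ → ℤ → ℤ → F) (k l m : ℤ) : Fin 3 → F :=
  ![t k (l+1) (m+1) * t (k+1) l m, t (k+1) l (m+1) * t k (l+1) m,
    t (k+1) (l+1) m * t k l (m+1)]

/-- The vector W of AKP conservation-law characteristics. -/
def vecW (t : ℤ → ℤ → ℤ → F) (k l m : ℤ) : Fin 4 → F :=
  ![t (k-1) (l+1) (m+1) / (t k (l+1) (m+1) * t k (l+1) m * t k l (m+1))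
      - t (k+2) l m / (t (k+1) l m * t (k+1) (l+1) m * t (k+1) l (m+1)),
    t (k+1) (l-1) (m+1) / (t (k+1) l (m+1) * t (k+1) l m * t k l (m+1))
      - t k (l+2) m / (t k (l+1) m * t k (l+1) (m+1) * t (k+1) (l+1) m),
    t (k+1) (l+1) (m-1) / (t (k+1) (l+1) m * t (k+1) l m * t k (l+1) m)
      - t k l (m+2) / (t k l (m+1) * t (k+1) l (m+1) * t k (l+1) (m+1)),
    t k l m / (t (k+1) l m * t k (l+1) m * t k l (m+1))
      - t (k+1) (l+1) (m+1) / (t (k+1) (l+1) m * t k (l+1) (m+1) * t (k+1) l (m+1))]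

theorem matrix_conservation_law (t : ℤ → ℤ → ℤ → F)
    (ht : ∀ k l m : ℤ, t k l m ≠ 0) :
    ∀ k l m : ℤ,
      matP t (k+1) l m - matP t k l m + matQ t k (l+1) m - matQ t k l m
        + matR t k l (m+1) - matR t k l m
      = Matrix.vecMulVec (vecV t k l m) (vecW t k l m) := by
  intro k l m
  have h2 : ∀ a : ℤ, a + 1 + 1 = a + 2 := fun a => by ring
  have h3 : ∀ a : ℤ, a + 1 - 1 = a := fun a => by ring
  have h4 : ∀ a : ℤ, a - 1 + 1 = a := fun a => by ring
  ext i j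
  fin_cases i <;> fin_cases j <;>
    simp only [matP, matQ, matR, vecV, vecW, Matrix.vecMulVec, Matrix.sub_apply,
      Matrix.add_apply, Matrix.of_apply, Matrix.cons_val', Matrix.cons_val_zero,
      Matrix.cons_val_one, Matrix.head_cons, Matrix.empty_val',
      Matrix.cons_val_fin_one, Matrix.head_fin_const, Matrix.cons_val_two,
      Matrix.cons_val_three, Matrix.tail_cons, h2, h3, h4, Fin.reduceFinMk] <;>
    field_simp [ht] <;>
    first
      | ring1
      | (rw [div_eq_iff (by simp [ht])]; ring)
end

section
/- If τ : ℤ³ → F is nowhere zero and satisfies the dual AKP equation with parameters a₁,…,a₄, then for each row i ∈ {1,2,3} the conservation law (Σⱼ aⱼPᵢⱼ)~ − Σⱼ aⱼPᵢⱼ + (Σⱼ aⱼQᵢⱼ)^ − Σⱼ aⱼQᵢⱼ + (Σⱼ aⱼRᵢⱼ)˙ − Σⱼ aⱼRᵢⱼ = 0 holds at every lattice point. -/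
variable {F : Type*} [Field F]

theorem frac6 {F : Type*} [Field F] (A1 A2 A3 A4 A5 A6 d1 d2 d3 d4 d5 d6 : F)
    (h1 : d1 ≠ 0) (h2 : d2 ≠ 0) (h3 : d3 ≠ 0) (h4 : d4 ≠ 0) (h5 : d5 ≠ 0) (h6 : d6 ≠ 0)
    (key : A1*(d2*d3*d4*d5*d6) - A2*(d1*d3*d4*d5*d6) + A3*(d1*d2*d4*d5*d6)
      - A4*(d1*d2*d3*d5*d6) + A5*(d1*d2*d3*d4*d6) - A6*(d1*d2*d3*d4*d5) = 0) :
    A1/d1 - A2/d2 + A3/d3 - A4/d4 + A5/d5 - A6/d6 = 0 := by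
  have e : A1/d1 + A3/d3 + A5/d5 = A2/d2 + A4/d4 + A6/d6 := by
    field_simp
    linear_combination key
  linear_combination e

set_option maxHeartbeats 2000000 in
theorem dualAKP_three_conservation_laws (a : Fin 4 → F) (t : ℤ → ℤ → ℤ → F)
    (ht : ∀ k l m : ℤ, t k l m ≠ 0)
    (hD : ∀ k l m : ℤ, dualAKP (a 0) (a 1) (a 2) (a 3) t k l m = 0) :
    ∀ (i : Fin 3) (k l m : ℤ),
      let S : ℤ → ℤ → ℤ → F := fun k l m => ∑ j : Fin 4, a j * matP t k l m i j
      let T : ℤ → ℤ → ℤ → F := fun k l m => ∑ j : Fin 4, a j * matQ t k l m i j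
      let U : ℤ → ℤ → ℤ → F := fun k l m => ∑ j : Fin 4, a j * matR t k l m i j
      S (k+1) l m - S k l m + T k (l+1) m - T k l m + U k l (m+1) - U k l m = 0 := by
  intro i k l m
  have h := hD k l m
  simp only [dualAKP] at h
  fin_cases i <;>
    simp only [matP, matQ, matR, Fin.sum_univ_four, Fin.isValue, Fin.mk_one, Matrix.cons_val',
      Matrix.cons_val_zero, Matrix.cons_val_one, Matrix.head_cons, Matrix.head_fin_const,
      Matrix.empty_val', Matrix.cons_val_fin_one, Matrix.of_apply, Matrix.cons_val_two,
      Matrix.cons_val_three, Matrix.tail_cons, show (⟨2,by norm_num⟩ : Fin 3) = 2 from rfl,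
      show (⟨1,by norm_num⟩ : Fin 3) = 1 from rfl, show (⟨0,by norm_num⟩ : Fin 3) = 0 from rfl]
  · simp only [show ∀ x:ℤ, x+1+1=x+2 from fun x => by ring, show ∀ x:ℤ, x+1-1=x from fun x => by ring] at h ⊢
    obtain ⟨x0_0_0, hx0_0_0⟩ : ∃ x, x = t k l m := ⟨_, rfl⟩
    have nx0_0_0 : x0_0_0 ≠ 0 := by rw [hx0_0_0]; exact ht _ _ _
    obtain ⟨x1_0_0, hx1_0_0⟩ : ∃ x, x = t (k+1) l m := ⟨_, rfl⟩
    have nx1_0_0 : x1_0_0 ≠ 0 := by rw [hx1_0_0]; exact ht _ _ _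
    obtain ⟨x0_1_0, hx0_1_0⟩ : ∃ x, x = t k (l+1) m := ⟨_, rfl⟩
    have nx0_1_0 : x0_1_0 ≠ 0 := by rw [hx0_1_0]; exact ht _ _ _
    obtain ⟨x0_0_1, hx0_0_1⟩ : ∃ x, x = t k l (m+1) := ⟨_, rfl⟩
    have nx0_0_1 : x0_0_1 ≠ 0 := by rw [hx0_0_1]; exact ht _ _ _
    obtain ⟨x1_1_0, hx1_1_0⟩ : ∃ x, x = t (k+1) (l+1) m := ⟨_, rfl⟩
    have nx1_1_0 : x1_1_0 ≠ 0 := by rw [hx1_1_0]; exact ht _ _ _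
    obtain ⟨x1_0_1, hx1_0_1⟩ : ∃ x, x = t (k+1) l (m+1) := ⟨_, rfl⟩
    have nx1_0_1 : x1_0_1 ≠ 0 := by rw [hx1_0_1]; exact ht _ _ _
    obtain ⟨x0_1_1, hx0_1_1⟩ : ∃ x, x = t k (l+1) (m+1) := ⟨_, rfl⟩
    have nx0_1_1 : x0_1_1 ≠ 0 := by rw [hx0_1_1]; exact ht _ _ _
    obtain ⟨x1_1_1, hx1_1_1⟩ : ∃ x, x = t (k+1) (l+1) (m+1) := ⟨_, rfl⟩
    have nx1_1_1 : x1_1_1 ≠ 0 := by rw [hx1_1_1]; exact ht _ _ _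
    obtain ⟨x2_0_0, hx2_0_0⟩ : ∃ x, x = t (k+2) l m := ⟨_, rfl⟩
    have nx2_0_0 : x2_0_0 ≠ 0 := by rw [hx2_0_0]; exact ht _ _ _
    obtain ⟨x0_2_0, hx0_2_0⟩ : ∃ x, x = t k (l+2) m := ⟨_, rfl⟩
    have nx0_2_0 : x0_2_0 ≠ 0 := by rw [hx0_2_0]; exact ht _ _ _
    obtain ⟨x0_0_2, hx0_0_2⟩ : ∃ x, x = t k l (m+2) := ⟨_, rfl⟩
    have nx0_0_2 : x0_0_2 ≠ 0 := by rw [hx0_0_2]; exact ht _ _ _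
    obtain ⟨xn1_1_1, hxn1_1_1⟩ : ∃ x, x = t (k-1) (l+1) (m+1) := ⟨_, rfl⟩
    have nxn1_1_1 : xn1_1_1 ≠ 0 := by rw [hxn1_1_1]; exact ht _ _ _
    obtain ⟨x1_n1_1, hx1_n1_1⟩ : ∃ x, x = t (k+1) (l-1) (m+1) := ⟨_, rfl⟩
    have nx1_n1_1 : x1_n1_1 ≠ 0 := by rw [hx1_n1_1]; exact ht _ _ _
    obtain ⟨x1_1_n1, hx1_1_n1⟩ : ∃ x, x = t (k+1) (l+1) (m-1) := ⟨_, rfl⟩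
    have nx1_1_n1 : x1_1_n1 ≠ 0 := by rw [hx1_1_n1]; exact ht _ _ _
    obtain ⟨x1_n1_0, hx1_n1_0⟩ : ∃ x, x = t (k+1) (l-1) m := ⟨_, rfl⟩
    have nx1_n1_0 : x1_n1_0 ≠ 0 := by rw [hx1_n1_0]; exact ht _ _ _
    obtain ⟨x1_0_n1, hx1_0_n1⟩ : ∃ x, x = t (k+1) l (m-1) := ⟨_, rfl⟩
    have nx1_0_n1 : x1_0_n1 ≠ 0 := by rw [hx1_0_n1]; exact ht _ _ _
    obtain ⟨x0_1_n1, hx0_1_n1⟩ : ∃ x, x = t k (l+1) (m-1) := ⟨_, rfl⟩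
    have nx0_1_n1 : x0_1_n1 ≠ 0 := by rw [hx0_1_n1]; exact ht _ _ _
    obtain ⟨xn1_1_0, hxn1_1_0⟩ : ∃ x, x = t (k-1) (l+1) m := ⟨_, rfl⟩
    have nxn1_1_0 : xn1_1_0 ≠ 0 := by rw [hxn1_1_0]; exact ht _ _ _
    obtain ⟨x0_n1_1, hx0_n1_1⟩ : ∃ x, x = t k (l-1) (m+1) := ⟨_, rfl⟩
    have nx0_n1_1 : x0_n1_1 ≠ 0 := by rw [hx0_n1_1]; exact ht _ _ _
    obtain ⟨xn1_0_1, hxn1_0_1⟩ : ∃ x, x = t (k-1) l (m+1) := ⟨_, rfl⟩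
    have nxn1_0_1 : xn1_0_1 ≠ 0 := by rw [hxn1_0_1]; exact ht _ _ _
    simp only [← hx0_0_0, ← hx1_0_0, ← hx0_1_0, ← hx0_0_1, ← hx1_1_0, ← hx1_0_1, ← hx0_1_1, ← hx1_1_1, ← hx2_0_0, ← hx0_2_0, ← hx0_0_2, ← hxn1_1_1, ← hx1_n1_1, ← hx1_1_n1, ← hx1_n1_0, ← hx1_0_n1, ← hx0_1_n1, ← hxn1_1_0, ← hx0_n1_1, ← hxn1_0_1] at h ⊢
    have key : (- a 0 * (x2_0_0*x0_1_1) - a 3 * (x1_0_0*x1_1_1))/(x1_1_0*x1_0_1) - (- a 0 * (x1_0_0*xn1_1_1) - a 3 * (x0_0_0*x0_1_1))/(x0_1_0*x0_0_1) + (- a 1 * (x0_2_0*x1_0_0) + a 2 * (x0_1_1*x1_1_n1))/(x1_1_0*x0_1_0) - (- a 1 * (x0_1_0*x1_n1_0) + a 2 * (x0_0_1*x1_0_n1))/(x1_0_0*x0_0_0) + (a 1 * (x0_1_1*x1_n1_1) - a 2 * (x0_0_2*x1_0_0))/(x1_0_1*x0_0_1) - (a 1 * (x0_1_0*x1_n1_0)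 - a 2 * (x0_0_1*x1_0_n1))/(x1_0_0*x0_0_0) = 0 :=
      frac6 _ _ _ _ _ _ _ _ _ _ _ _ (mul_ne_zero nx1_1_0 nx1_0_1) (mul_ne_zero nx0_1_0 nx0_0_1) (mul_ne_zero nx1_1_0 nx0_1_0)
        (mul_ne_zero nx1_0_0 nx0_0_0) (mul_ne_zero nx1_0_1 nx0_0_1) (mul_ne_zero nx1_0_0 nx0_0_0) (by linear_combination (x0_0_0*x1_0_0 * (x0_0_0*x0_0_1*x0_1_0*x1_0_0*x1_0_1*x1_1_0)) * h)
    linear_combination key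
  · simp only [show ∀ x:ℤ, x+1+1=x+2 from fun x => by ring, show ∀ x:ℤ, x+1-1=x from fun x => by ring] at h ⊢
    obtain ⟨x0_0_0, hx0_0_0⟩ : ∃ x, x = t k l m := ⟨_, rfl⟩
    have nx0_0_0 : x0_0_0 ≠ 0 := by rw [hx0_0_0]; exact ht _ _ _
    obtain ⟨x1_0_0, hx1_0_0⟩ : ∃ x, x = t (k+1) l m := ⟨_, rfl⟩
    have nx1_0_0 : x1_0_0 ≠ 0 := by rw [hx1_0_0]; exact ht _ _ _
    obtain ⟨x0_1_0, hx0_1_0⟩ : ∃ x, x = t k (l+1) m := ⟨_, rfl⟩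
    have nx0_1_0 : x0_1_0 ≠ 0 := by rw [hx0_1_0]; exact ht _ _ _
    obtain ⟨x0_0_1, hx0_0_1⟩ : ∃ x, x = t k l (m+1) := ⟨_, rfl⟩
    have nx0_0_1 : x0_0_1 ≠ 0 := by rw [hx0_0_1]; exact ht _ _ _
    obtain ⟨x1_1_0, hx1_1_0⟩ : ∃ x, x = t (k+1) (l+1) m := ⟨_, rfl⟩
    have nx1_1_0 : x1_1_0 ≠ 0 := by rw [hx1_1_0]; exact ht _ _ _
    obtain ⟨x1_0_1, hx1_0_1⟩ : ∃ x, x = t (k+1) l (m+1) := ⟨_, rfl⟩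
    have nx1_0_1 : x1_0_1 ≠ 0 := by rw [hx1_0_1]; exact ht _ _ _
    obtain ⟨x0_1_1, hx0_1_1⟩ : ∃ x, x = t k (l+1) (m+1) := ⟨_, rfl⟩
    have nx0_1_1 : x0_1_1 ≠ 0 := by rw [hx0_1_1]; exact ht _ _ _
    obtain ⟨x1_1_1, hx1_1_1⟩ : ∃ x, x = t (k+1) (l+1) (m+1) := ⟨_, rfl⟩
    have nx1_1_1 : x1_1_1 ≠ 0 := by rw [hx1_1_1]; exact ht _ _ _
    obtain ⟨x2_0_0, hx2_0_0⟩ : ∃ x, x = t (k+2) l m := ⟨_, rfl⟩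
    have nx2_0_0 : x2_0_0 ≠ 0 := by rw [hx2_0_0]; exact ht _ _ _
    obtain ⟨x0_2_0, hx0_2_0⟩ : ∃ x, x = t k (l+2) m := ⟨_, rfl⟩
    have nx0_2_0 : x0_2_0 ≠ 0 := by rw [hx0_2_0]; exact ht _ _ _
    obtain ⟨x0_0_2, hx0_0_2⟩ : ∃ x, x = t k l (m+2) := ⟨_, rfl⟩
    have nx0_0_2 : x0_0_2 ≠ 0 := by rw [hx0_0_2]; exact ht _ _ _
    obtain ⟨xn1_1_1, hxn1_1_1⟩ : ∃ x, x = t (k-1) (l+1) (m+1) := ⟨_, rfl⟩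
    have nxn1_1_1 : xn1_1_1 ≠ 0 := by rw [hxn1_1_1]; exact ht _ _ _
    obtain ⟨x1_n1_1, hx1_n1_1⟩ : ∃ x, x = t (k+1) (l-1) (m+1) := ⟨_, rfl⟩
    have nx1_n1_1 : x1_n1_1 ≠ 0 := by rw [hx1_n1_1]; exact ht _ _ _
    obtain ⟨x1_1_n1, hx1_1_n1⟩ : ∃ x, x = t (k+1) (l+1) (m-1) := ⟨_, rfl⟩
    have nx1_1_n1 : x1_1_n1 ≠ 0 := by rw [hx1_1_n1]; exact ht _ _ _
    obtain ⟨x1_n1_0, hx1_n1_0⟩ : ∃ x, x = t (k+1) (l-1) m := ⟨_, rfl⟩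
    have nx1_n1_0 : x1_n1_0 ≠ 0 := by rw [hx1_n1_0]; exact ht _ _ _
    obtain ⟨x1_0_n1, hx1_0_n1⟩ : ∃ x, x = t (k+1) l (m-1) := ⟨_, rfl⟩
    have nx1_0_n1 : x1_0_n1 ≠ 0 := by rw [hx1_0_n1]; exact ht _ _ _
    obtain ⟨x0_1_n1, hx0_1_n1⟩ : ∃ x, x = t k (l+1) (m-1) := ⟨_, rfl⟩
    have nx0_1_n1 : x0_1_n1 ≠ 0 := by rw [hx0_1_n1]; exact ht _ _ _
    obtain ⟨xn1_1_0, hxn1_1_0⟩ : ∃ x, x = t (k-1) (l+1) m := ⟨_, rfl⟩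
    have nxn1_1_0 : xn1_1_0 ≠ 0 := by rw [hxn1_1_0]; exact ht _ _ _
    obtain ⟨x0_n1_1, hx0_n1_1⟩ : ∃ x, x = t k (l-1) (m+1) := ⟨_, rfl⟩
    have nx0_n1_1 : x0_n1_1 ≠ 0 := by rw [hx0_n1_1]; exact ht _ _ _
    obtain ⟨xn1_0_1, hxn1_0_1⟩ : ∃ x, x = t (k-1) l (m+1) := ⟨_, rfl⟩
    have nxn1_0_1 : xn1_0_1 ≠ 0 := by rw [hxn1_0_1]; exact ht _ _ _
    simp only [← hx0_0_0, ← hx1_0_0, ← hx0_1_0, ← hx0_0_1, ← hx1_1_0, ← hx1_0_1, ← hx0_1_1, ← hx1_1_1, ← hx2_0_0, ← hx0_2_0, ← hx0_0_2, ← hxn1_1_1, ← hx1_n1_1, ← hx1_1_n1, ← hx1_n1_0, ← hx1_0_n1, ← hx0_1_n1, ← hxn1_1_0, ← hx0_n1_1, ← hxn1_0_1] at h ⊢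
    have key : (- a 0 * (x2_0_0*x0_1_0) + a 2 * (x1_0_1*x1_1_n1))/(x1_1_0*x1_0_0) - (- a 0 * (x1_0_0*xn1_1_0) + a 2 * (x0_0_1*x0_1_n1))/(x0_1_0*x0_0_0) + (- a 1 * (x0_2_0*x1_0_1) - a 3 * (x0_1_0*x1_1_1))/(x1_1_0*x0_1_1) - (- a 1 * (x0_1_0*x1_n1_1) - a 3 * (x0_0_0*x1_0_1))/(x1_0_0*x0_0_1) + (a 0 * (x1_0_1*xn1_1_1) - a 2 * (x0_0_2*x0_1_0))/(x0_1_1*x0_0_1) - (a 0 * (x1_0_0*xn1_1_0) - a 2 * (x0_0_1*x0_1_n1))/(x0_1_0*x0_0_0) = 0 :=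
      frac6 _ _ _ _ _ _ _ _ _ _ _ _ (mul_ne_zero nx1_1_0 nx1_0_0) (mul_ne_zero nx0_1_0 nx0_0_0) (mul_ne_zero nx1_1_0 nx0_1_1)
        (mul_ne_zero nx1_0_0 nx0_0_1) (mul_ne_zero nx0_1_1 nx0_0_1) (mul_ne_zero nx0_1_0 nx0_0_0) (by linear_combination (x0_0_0*x0_1_0 * (x0_0_0*x0_0_1*x0_1_0*x0_1_1*x1_0_0*x1_1_0)) * h)
    linear_combination key
  · simp only [show ∀ x:ℤ, x+1+1=x+2 from fun x => by ring, show ∀ x:ℤ, x+1-1=x from fun x => by ring] at h ⊢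
    obtain ⟨x0_0_0, hx0_0_0⟩ : ∃ x, x = t k l m := ⟨_, rfl⟩
    have nx0_0_0 : x0_0_0 ≠ 0 := by rw [hx0_0_0]; exact ht _ _ _
    obtain ⟨x1_0_0, hx1_0_0⟩ : ∃ x, x = t (k+1) l m := ⟨_, rfl⟩
    have nx1_0_0 : x1_0_0 ≠ 0 := by rw [hx1_0_0]; exact ht _ _ _
    obtain ⟨x0_1_0, hx0_1_0⟩ : ∃ x, x = t k (l+1) m := ⟨_, rfl⟩
    have nx0_1_0 : x0_1_0 ≠ 0 := by rw [hx0_1_0]; exact ht _ _ _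
    obtain ⟨x0_0_1, hx0_0_1⟩ : ∃ x, x = t k l (m+1) := ⟨_, rfl⟩
    have nx0_0_1 : x0_0_1 ≠ 0 := by rw [hx0_0_1]; exact ht _ _ _
    obtain ⟨x1_1_0, hx1_1_0⟩ : ∃ x, x = t (k+1) (l+1) m := ⟨_, rfl⟩
    have nx1_1_0 : x1_1_0 ≠ 0 := by rw [hx1_1_0]; exact ht _ _ _
    obtain ⟨x1_0_1, hx1_0_1⟩ : ∃ x, x = t (k+1) l (m+1) := ⟨_, rfl⟩
    have nx1_0_1 : x1_0_1 ≠ 0 := by rw [hx1_0_1]; exact ht _ _ _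
    obtain ⟨x0_1_1, hx0_1_1⟩ : ∃ x, x = t k (l+1) (m+1) := ⟨_, rfl⟩
    have nx0_1_1 : x0_1_1 ≠ 0 := by rw [hx0_1_1]; exact ht _ _ _
    obtain ⟨x1_1_1, hx1_1_1⟩ : ∃ x, x = t (k+1) (l+1) (m+1) := ⟨_, rfl⟩
    have nx1_1_1 : x1_1_1 ≠ 0 := by rw [hx1_1_1]; exact ht _ _ _
    obtain ⟨x2_0_0, hx2_0_0⟩ : ∃ x, x = t (k+2) l m := ⟨_, rfl⟩
    have nx2_0_0 : x2_0_0 ≠ 0 := by rw [hx2_0_0]; exact ht _ _ _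
    obtain ⟨x0_2_0, hx0_2_0⟩ : ∃ x, x = t k (l+2) m := ⟨_, rfl⟩
    have nx0_2_0 : x0_2_0 ≠ 0 := by rw [hx0_2_0]; exact ht _ _ _
    obtain ⟨x0_0_2, hx0_0_2⟩ : ∃ x, x = t k l (m+2) := ⟨_, rfl⟩
    have nx0_0_2 : x0_0_2 ≠ 0 := by rw [hx0_0_2]; exact ht _ _ _
    obtain ⟨xn1_1_1, hxn1_1_1⟩ : ∃ x, x = t (k-1) (l+1) (m+1) := ⟨_, rfl⟩
    have nxn1_1_1 : xn1_1_1 ≠ 0 := by rw [hxn1_1_1]; exact ht _ _ _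
    obtain ⟨x1_n1_1, hx1_n1_1⟩ : ∃ x, x = t (k+1) (l-1) (m+1) := ⟨_, rfl⟩
    have nx1_n1_1 : x1_n1_1 ≠ 0 := by rw [hx1_n1_1]; exact ht _ _ _
    obtain ⟨x1_1_n1, hx1_1_n1⟩ : ∃ x, x = t (k+1) (l+1) (m-1) := ⟨_, rfl⟩
    have nx1_1_n1 : x1_1_n1 ≠ 0 := by rw [hx1_1_n1]; exact ht _ _ _
    obtain ⟨x1_n1_0, hx1_n1_0⟩ : ∃ x, x = t (k+1) (l-1) m := ⟨_, rfl⟩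
    have nx1_n1_0 : x1_n1_0 ≠ 0 := by rw [hx1_n1_0]; exact ht _ _ _
    obtain ⟨x1_0_n1, hx1_0_n1⟩ : ∃ x, x = t (k+1) l (m-1) := ⟨_, rfl⟩
    have nx1_0_n1 : x1_0_n1 ≠ 0 := by rw [hx1_0_n1]; exact ht _ _ _
    obtain ⟨x0_1_n1, hx0_1_n1⟩ : ∃ x, x = t k (l+1) (m-1) := ⟨_, rfl⟩
    have nx0_1_n1 : x0_1_n1 ≠ 0 := by rw [hx0_1_n1]; exact ht _ _ _
    obtain ⟨xn1_1_0, hxn1_1_0⟩ : ∃ x, x = t (k-1) (l+1) m := ⟨_, rfl⟩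
    have nxn1_1_0 : xn1_1_0 ≠ 0 := by rw [hxn1_1_0]; exact ht _ _ _
    obtain ⟨x0_n1_1, hx0_n1_1⟩ : ∃ x, x = t k (l-1) (m+1) := ⟨_, rfl⟩
    have nx0_n1_1 : x0_n1_1 ≠ 0 := by rw [hx0_n1_1]; exact ht _ _ _
    obtain ⟨xn1_0_1, hxn1_0_1⟩ : ∃ x, x = t (k-1) l (m+1) := ⟨_, rfl⟩
    have nxn1_0_1 : xn1_0_1 ≠ 0 := by rw [hxn1_0_1]; exact ht _ _ _
    simp only [← hx0_0_0, ← hx1_0_0, ← hx0_1_0, ← hx0_0_1, ← hx1_1_0, ← hx1_0_1, ← hx0_1_1, ← hx1_1_1, ← hx2_0_0, ← hx0_2_0, ← hx0_0_2, ← hxn1_1_1, ← hx1_n1_1, ← hx1_1_n1, ← hx1_n1_0, ← hx1_0_n1, ← hx0_1_n1, ← hxn1_1_0, ← hx0_n1_1, ← hxn1_0_1] at h ⊢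
    have key : (- a 0 * (x2_0_0*x0_0_1) + a 1 * (x1_1_0*x1_n1_1))/(x1_0_1*x1_0_0) - (- a 0 * (x1_0_0*xn1_0_1) + a 1 * (x0_1_0*x0_n1_1))/(x0_0_1*x0_0_0) + (a 0 * (x1_1_0*xn1_1_1) - a 1 * (x0_2_0*x0_0_1))/(x0_1_1*x0_1_0) - (a 0 * (x1_0_0*xn1_0_1) - a 1 * (x0_1_0*x0_n1_1))/(x0_0_1*x0_0_0) + (- a 2 * (x0_0_2*x1_1_0) - a 3 * (x1_1_1*x0_0_1))/(x1_0_1*x0_1_1) - (- a 2 * (x0_0_1*x1_1_n1) - a 3 * (x1_1_0*x0_0_0))/(x1_0_0*x0_1_0) = 0 :=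
      frac6 _ _ _ _ _ _ _ _ _ _ _ _ (mul_ne_zero nx1_0_1 nx1_0_0) (mul_ne_zero nx0_0_1 nx0_0_0) (mul_ne_zero nx0_1_1 nx0_1_0)
        (mul_ne_zero nx0_0_1 nx0_0_0) (mul_ne_zero nx1_0_1 nx0_1_1) (mul_ne_zero nx1_0_0 nx0_1_0) (by linear_combination (x0_0_0*x0_0_1 * (x0_0_0*x0_0_1*x0_1_0*x0_1_1*x1_0_0*x1_0_1)) * h)
    linear_combination key
end

section
/- Setting the m-shift equal to the l-shift (i.e. considering τ independent of the difference of l and m appropriately) and with u = e, v = q̃, z = w = 0, a₁ + a₄ = 0, the Q³D difference equation a₁(û − ũ) + a₂(z̃ − ẑ) + a₃(w − ẇ) + a₄(v − v̇) = 0 together with the quotient relation ũ̂/ũ = ṽ/v̇ reduces to Rutishauser's QD algorithm: ẽ + q̃ = ê + q̃̂ and ê·q̂ = e·q̃. Precisely: if e, q : ℤ² → F (F a field, values of e, q nonzero) satisfy the two-variable system obtained from the Q³D system under the identification hat = dot, u = e, v = q̃, z = w = 0, a₁ = −a₄ = 1, a₂, a₃ arbitrary, then e and q satisfy ẽ + q̃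 = ê + q̂̃ and ê q̂ = e q̃, and conversely. -/
theorem q3d_reduces_to_QD
    {F : Type*} [Field F] (e q : ℤ → ℤ → F)
    (he : ∀ k l : ℤ, e k l ≠ 0) (hq : ∀ k l : ℤ, q k l ≠ 0) :
    (∀ k l : ℤ,
        (e k (l+1) - e (k+1) l) + (-1 : F) * (q (k+1) l - q (k+1) (l+1)) = 0 ∧
        e (k+1) (l+1) / e (k+1) l = q (k+2) l / q (k+1) (l+1)) ↔
    (∀ k l : ℤ,
        e (k+1) l + q (k+1) l = e k (l+1) + q (k+1) (l+1) ∧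
        e k (l+1) * q k (l+1) = e k l * q (k+1) l) := by
  constructor
  · intro h k l
    obtain ⟨h1, _⟩ := h k l
    obtain ⟨_, h2⟩ := h (k-1) l
    constructor
    · linear_combination -h1
    · have e1 : e (k-1+1) (l+1) = e k (l+1) := by norm_num
      have e2 : e (k-1+1) l = e k l := by norm_num
      have e3 : q (k-1+2) l = q (k+1) l := by ring_nf
      have e4 : q (k-1+1) (l+1) = q k (l+1) := by norm_num
      rw [e1, e2, e3, e4, div_eq_div_iff (he _ _) (hq _ _)] at h2
      linear_combination h2
  · intro h k l
    obtain ⟨h1, _⟩ := h k l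
    obtain ⟨_, h2⟩ := h (k+1) l
    have ek : (k+1+1 : ℤ) = k+2 := by ring
    rw [ek] at h2
    constructor
    · linear_combination -h1
    · rw [div_eq_div_iff (he _ _) (hq _ _)]
      linear_combination h2
end

section
/- If τ : ℤ³ → F is nowhere zero, then the AKP conservation-law characteristic vector W and the vector V = (τ_{k,l+1,m+1}τ_{k+1,l,m}, τ_{k+1,l,m+1}τ_{k,l+1,m}, τ_{k+1,l+1,m}τ_{k,l,m+1}) satisfy: the AKP equation at (k,l,m) is equivalent to X·Vᵀ = 0 where X = (A,B,C), and the dual AKP equation at (k,l,m) is equivalent to W·wᵀ = 0 where w = (a₁,a₂,a₃,a₄); i.e., the identity W·wᵀ multiplied by τ̃τ̂τ̇τ̃̂τ̂̇τ̃̇ (the product of the six denominator factors) equals the left-hand side of the dual AKP equation up to the stated common factor. -/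
theorem akp_and_dualAKP_via_V_and_W
    {F : Type*} [Field F] (A B C a1 a2 a3 a4 : F) (t : ℤ → ℤ → ℤ → F)
    (ht : ∀ k l m : ℤ, t k l m ≠ 0) :
    ∀ k l m : ℤ,
      let V1 : F := t k (l+1) (m+1) * t (k+1) l m
      let V2 : F := t (k+1) l (m+1) * t k (l+1) m
      let V3 : F := t (k+1) (l+1) m * t k l (m+1)
      let W1 : F := t (k-1) (l+1) (m+1) / (t k (l+1) (m+1) * t k (l+1) m * t k l (m+1))
          - t (k+2) l m / (t (k+1) l m * t (k+1) (l+1) m * t (k+1) l (m+1))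
      let W2 : F := t (k+1) (l-1) (m+1) / (t (k+1) l (m+1) * t (k+1) l m * t k l (m+1))
          - t k (l+2) m / (t k (l+1) m * t k (l+1) (m+1) * t (k+1) (l+1) m)
      let W3 : F := t (k+1) (l+1) (m-1) / (t (k+1) (l+1) m * t (k+1) l m * t k (l+1) m)
          - t k l (m+2) / (t k l (m+1) * t (k+1) l (m+1) * t k (l+1) (m+1))
      let W4 : F := t k l m / (t (k+1) l m * t k (l+1) m * t k l (m+1))
          - t (k+1) (l+1) (m+1) / (t (k+1) (l+1) m * t k (l+1) (m+1) * t (k+1) l (m+1))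
      ((A * (t (k+1) l m * t k (l+1) (m+1)) + B * (t k (l+1) m * t (k+1) l (m+1))
          + C * (t k l (m+1) * t (k+1) (l+1) m) = 0)
        ↔ A * V1 + B * V2 + C * V3 = 0) ∧
      ((dualAKP a1 a2 a3 a4 t k l m = 0)
        ↔ a1 * W1 + a2 * W2 + a3 * W3 + a4 * W4 = 0) := by
  intro k l m
  dsimp only
  constructor
  · constructor <;> intro h <;> linear_combination h
  · have hD : t (k+1) l m * t k (l+1) m * t k l (m+1) * t (k+1) (l+1) m
        * t k (l+1) (m+1) * t (k+1) l (m+1) ≠ 0 := mul_ne_zero (mul_ne_zero (mul_ne_zero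
        (mul_ne_zero (mul_ne_zero (ht _ _ _) (ht _ _ _)) (ht _ _ _)) (ht _ _ _)) (ht _ _ _))
        (ht _ _ _)
    have e1 : (t (k-1) (l+1) (m+1) / (t k (l+1) (m+1) * t k (l+1) m * t k l (m+1))) * (t (k+1) l m * t k (l+1) m * t k l (m+1) * t (k+1) (l+1) m * t k (l+1) (m+1) * t (k+1) l (m+1)) = t (k-1) (l+1) (m+1) * (t (k+1) l m * t (k+1) (l+1) m * t (k+1) l (m+1)) := by
      rw [div_mul_eq_mul_div, div_eq_iff (mul_ne_zero (mul_ne_zero (ht _ _ _) (ht _ _ _)) (ht _ _ _))]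
      ring
    have e2 : (t (k+2) l m / (t (k+1) l m * t (k+1) (l+1) m * t (k+1) l (m+1))) * (t (k+1) l m * t k (l+1) m * t k l (m+1) * t (k+1) (l+1) m * t k (l+1) (m+1) * t (k+1) l (m+1)) = t (k+2) l m * (t k (l+1) m * t k l (m+1) * t k (l+1) (m+1)) := by
      rw [div_mul_eq_mul_div, div_eq_iff (mul_ne_zero (mul_ne_zero (ht _ _ _) (ht _ _ _)) (ht _ _ _))]
      ring
    have e3 : (t (k+1) (l-1) (m+1) / (t (k+1) l (m+1) * t (k+1) l m * t k l (m+1))) * (t (k+1) l m * t k (l+1) m * t k l (m+1) * t (k+1) (l+1) m * t k (l+1) (m+1) * t (k+1) l (m+1)) = t (k+1) (l-1) (m+1) * (t k (l+1) m * t (k+1) (l+1) m * t k (l+1) (m+1)) := by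
      rw [div_mul_eq_mul_div, div_eq_iff (mul_ne_zero (mul_ne_zero (ht _ _ _) (ht _ _ _)) (ht _ _ _))]
      ring
    have e4 : (t k (l+2) m / (t k (l+1) m * t k (l+1) (m+1) * t (k+1) (l+1) m)) * (t (k+1) l m * t k (l+1) m * t k l (m+1) * t (k+1) (l+1) m * t k (l+1) (m+1) * t (k+1) l (m+1)) = t k (l+2) m * (t (k+1) l m * t k l (m+1) * t (k+1) l (m+1)) := by
      rw [div_mul_eq_mul_div, div_eq_iff (mul_ne_zero (mul_ne_zero (ht _ _ _) (ht _ _ _)) (ht _ _ _))]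
      ring
    have e5 : (t (k+1) (l+1) (m-1) / (t (k+1) (l+1) m * t (k+1) l m * t k (l+1) m)) * (t (k+1) l m * t k (l+1) m * t k l (m+1) * t (k+1) (l+1) m * t k (l+1) (m+1) * t (k+1) l (m+1)) = t (k+1) (l+1) (m-1) * (t k l (m+1) * t k (l+1) (m+1) * t (k+1) l (m+1)) := by
      rw [div_mul_eq_mul_div, div_eq_iff (mul_ne_zero (mul_ne_zero (ht _ _ _) (ht _ _ _)) (ht _ _ _))]
      ring
    have e6 : (t k l (m+2) / (t k l (m+1) * t (k+1) l (m+1) * t k (l+1) (m+1))) * (t (k+1) l m * t k (l+1) m * t k l (m+1) * t (k+1) (l+1) m * t k (l+1) (m+1) * t (k+1) l (m+1)) = t k l (m+2) * (t (k+1) l m * t k (l+1) m * t (k+1) (l+1) m) := by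
      rw [div_mul_eq_mul_div, div_eq_iff (mul_ne_zero (mul_ne_zero (ht _ _ _) (ht _ _ _)) (ht _ _ _))]
      ring
    have e7 : (t k l m / (t (k+1) l m * t k (l+1) m * t k l (m+1))) * (t (k+1) l m * t k (l+1) m * t k l (m+1) * t (k+1) (l+1) m * t k (l+1) (m+1) * t (k+1) l (m+1)) = t k l m * (t (k+1) (l+1) m * t k (l+1) (m+1) * t (k+1) l (m+1)) := by
      rw [div_mul_eq_mul_div, div_eq_iff (mul_ne_zero (mul_ne_zero (ht _ _ _) (ht _ _ _)) (ht _ _ _))]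
      ring
    have e8 : (t (k+1) (l+1) (m+1) / (t (k+1) (l+1) m * t k (l+1) (m+1) * t (k+1) l (m+1))) * (t (k+1) l m * t k (l+1) m * t k l (m+1) * t (k+1) (l+1) m * t k (l+1) (m+1) * t (k+1) l (m+1)) = t (k+1) (l+1) (m+1) * (t (k+1) l m * t k (l+1) m * t k l (m+1)) := by
      rw [div_mul_eq_mul_div, div_eq_iff (mul_ne_zero (mul_ne_zero (ht _ _ _) (ht _ _ _)) (ht _ _ _))]
      ring
    have key : dualAKP a1 a2 a3 a4 t k l m
        = (a1 * (t (k-1) (l+1) (m+1) / (t k (l+1) (m+1) * t k (l+1) m * t k l (m+1))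
          - t (k+2) l m / (t (k+1) l m * t (k+1) (l+1) m * t (k+1) l (m+1)))
        + a2 * (t (k+1) (l-1) (m+1) / (t (k+1) l (m+1) * t (k+1) l m * t k l (m+1))
          - t k (l+2) m / (t k (l+1) m * t k (l+1) (m+1) * t (k+1) (l+1) m))
        + a3 * (t (k+1) (l+1) (m-1) / (t (k+1) (l+1) m * t (k+1) l m * t k (l+1) m)
          - t k l (m+2) / (t k l (m+1) * t (k+1) l (m+1) * t k (l+1) (m+1)))
        + a4 * (t k l m / (t (k+1) l m * t k (l+1) m * t k l (m+1))
          - t (k+1) (l+1) (m+1) / (t (k+1) (l+1) m * t k (l+1) (m+1) * t (k+1) l (m+1))))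
        * (t (k+1) l m * t k (l+1) m * t k l (m+1) * t (k+1) (l+1) m
          * t k (l+1) (m+1) * t (k+1) l (m+1)) := by
      unfold dualAKP
      linear_combination a1 * e2 - a1 * e1 + a2 * e4 - a2 * e3 + a3 * e6 - a3 * e5
        + a4 * e8 - a4 * e7
    rw [key, mul_eq_zero]
    simp [hD]
end
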